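/- Assume the set Θ_opt of minimizers of J_p over ℝ^d is nonempty. Then there exists a unique point x_opt ∈ span{φ(S)} such that the set of pairs (θ̄, x̄) ∈ ℝ^d × span{φ(S)} that are saddle points of ψ^o — i.e. satisfy ψ^o(θ, x̄) ≥ ψ^o(θ̄, x̄) ≥ ψ^o(θ̄, x) for all θ ∈ ℝ^d and all x ∈ ℝ^d — equals Θ_opt × {x_opt}; moreover, for any θ̄ ∈ Θ_opt, x_opt is the unique solution in span{φ(S)} of the linear system ΦᵀΞΦx = ΦᵀΞ(T^{(λ)}v_θ̄ − v_θ̄). -/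

import Mathlib

open Matrix

/-- If the set `Θ_opt` of minimizers of `J_p` over `ℝ^d` is nonempty, then
there is a unique `x_opt ∈ span{φ(S)}` such that the set of saddle points `(θ̄,x̄)` of `ψ^o`
with `x̄ ∈ span{φ(S)}` equals `Θ_opt × {x_opt}`; moreover, for any `θ̄ ∈ Θ_opt`, `x_opt` is
the unique solution in `span{φ(S)}` of `ΦᵀΞΦx = ΦᵀΞ(T v_θ̄ − v_θ̄)`. -/
theorem stmt_14
    (n d : ℕ) (hn : 0 < n) (hd : 0 < d)
    (Φ : Matrix (Fin n) (Fin d) ℝ) (hΦ : Φ ≠ 0)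
    (ξ : Fin n → ℝ) (hξ : ∀ i, 0 < ξ i)
    (Ξ : Matrix (Fin n) (Fin n) ℝ) (hΞ : Ξ = Matrix.diagonal ξ)
    (proj : (Fin n → ℝ) → (Fin n → ℝ))
    (hproj_mem : ∀ v : Fin n → ℝ, ∃ θ : Fin d → ℝ, proj v = Φ.mulVec θ)
    (hproj_orth : ∀ (v : Fin n → ℝ) (θ : Fin d → ℝ),
      Φ.mulVec θ ⬝ᵥ Ξ.mulVec (v - proj v) = 0)
    (P : Matrix (Fin n) (Fin n) ℝ) (r : Fin n → ℝ)
    (T : (Fin n → ℝ) → (Fin n → ℝ)) (hT : ∀ v, T v = r + P.mulVec v)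
    (p : (Fin d → ℝ) → ℝ)
    (hp_conv : ConvexOn ℝ Set.univ p) (hp_diff : Differentiable ℝ p)
    -- `J_p(θ) = ½‖Π_ξ(T v_θ − v_θ)‖²_ξ + p(θ)`
    (Jp : (Fin d → ℝ) → ℝ)
    (hJp : ∀ θ : Fin d → ℝ,
      Jp θ = (1 / 2) * (proj (T (Φ.mulVec θ) - Φ.mulVec θ) ⬝ᵥ
          Ξ.mulVec (proj (T (Φ.mulVec θ) - Φ.mulVec θ))) + p θ)
    -- `ψ^o(θ,x) = ⟨Φx, T v_θ − v_θ⟩_ξ − ½‖Φx‖²_ξ + p(θ)`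
    (ψ : (Fin d → ℝ) → (Fin d → ℝ) → ℝ)
    (hψ : ∀ θ x : Fin d → ℝ,
      ψ θ x = Φ.mulVec x ⬝ᵥ Ξ.mulVec (T (Φ.mulVec θ) - Φ.mulVec θ)
        - (1 / 2) * (Φ.mulVec x ⬝ᵥ Ξ.mulVec (Φ.mulVec x)) + p θ)
    -- `Θ_opt` is nonempty
    (hne : {θ : Fin d → ℝ | ∀ θ', Jp θ ≤ Jp θ'}.Nonempty) :
    ∃ xopt : Fin d → ℝ,
      xopt ∈ Submodule.span ℝ (Set.range (fun i : Fin n => Φ i)) ∧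
      -- the saddle points with second component in `span{φ(S)}` are `Θ_opt × {x_opt}`
      ({q : (Fin d → ℝ) × (Fin d → ℝ) |
          q.2 ∈ Submodule.span ℝ (Set.range (fun i : Fin n => Φ i)) ∧
          (∀ θ : Fin d → ℝ, ψ q.1 q.2 ≤ ψ θ q.2) ∧
          (∀ x : Fin d → ℝ, ψ q.1 x ≤ ψ q.1 q.2)} =
        {θ : Fin d → ℝ | ∀ θ', Jp θ ≤ Jp θ'} ×ˢ {xopt}) ∧
      -- `x_opt` is the unique such point
      (∀ y : Fin d → ℝ, y ∈ Submodule.span ℝ (Set.range (fun i : Fin n => Φ i)) →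
        ({q : (Fin d → ℝ) × (Fin d → ℝ) |
            q.2 ∈ Submodule.span ℝ (Set.range (fun i : Fin n => Φ i)) ∧
            (∀ θ : Fin d → ℝ, ψ q.1 q.2 ≤ ψ θ q.2) ∧
            (∀ x : Fin d → ℝ, ψ q.1 x ≤ ψ q.1 q.2)} =
          {θ : Fin d → ℝ | ∀ θ', Jp θ ≤ Jp θ'} ×ˢ {y}) → y = xopt) ∧
      -- for any `θ̄ ∈ Θ_opt`, `x_opt` is the unique solution in span of the linear system
      (∀ θb : Fin d → ℝ, (∀ θ', Jp θb ≤ Jp θ') →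
        (Φᵀ * Ξ * Φ).mulVec xopt = (Φᵀ * Ξ).mulVec (T (Φ.mulVec θb) - Φ.mulVec θb) ∧
        (∀ x : Fin d → ℝ, x ∈ Submodule.span ℝ (Set.range (fun i : Fin n => Φ i)) →
          (Φᵀ * Ξ * Φ).mulVec x = (Φᵀ * Ξ).mulVec (T (Φ.mulVec θb) - Φ.mulVec θb) →
          x = xopt)) := by
  classical
  -- the ξ-inner product as an explicit sum
  have hB : ∀ u v : Fin n → ℝ, u ⬝ᵥ Ξ.mulVec v = ∑ i, u i * (ξ i * v i) := by
    intro u v; rw [hΞ]; simp [dotProduct, Matrix.mulVec_diagonal]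
  have hBnn : ∀ v : Fin n → ℝ, 0 ≤ v ⬝ᵥ Ξ.mulVec v := by
    intro v; rw [hB]
    apply Finset.sum_nonneg; intro i _
    have h1 : v i * (ξ i * v i) = ξ i * (v i)^2 := by ring
    rw [h1]; exact mul_nonneg (hξ i).le (sq_nonneg _)
  have hBzero : ∀ v : Fin n → ℝ, v ⬝ᵥ Ξ.mulVec v = 0 → v = 0 := by
    intro v h; rw [hB] at h
    funext i
    have hnn : ∀ j ∈ Finset.univ, (0:ℝ) ≤ v j * (ξ j * v j) := by
      intro j _
      have h1 : v j * (ξ j * v j) = ξ j * (v j)^2 := by ring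
      rw [h1]; exact mul_nonneg (hξ j).le (sq_nonneg _)
    have hi := (Finset.sum_eq_zero_iff_of_nonneg hnn).mp h i (Finset.mem_univ i)
    have h2 : ξ i * (v i * v i) = 0 := by nlinarith [hi]
    have h3 : v i * v i = 0 := by
      rcases mul_eq_zero.mp h2 with h | h
      · exact absurd h (ne_of_gt (hξ i))
      · exact h
    exact mul_self_eq_zero.mp h3
  -- key identity: Jp θ = ψ θ x + ½‖proj(δθ) − Φx‖²
  have hkey : ∀ θ x : Fin d → ℝ,
      Jp θ = ψ θ x + (1/2) * ((proj (T (Φ.mulVec θ) - Φ.mulVec θ) - Φ.mulVec x) ⬝ᵥ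
        Ξ.mulVec (proj (T (Φ.mulVec θ) - Φ.mulVec θ) - Φ.mulVec x)) := by
    intro θ x
    have horth := hproj_orth (T (Φ.mulVec θ) - Φ.mulVec θ) x
    rw [hJp, hψ]
    set v := T (Φ.mulVec θ) - Φ.mulVec θ with hv
    set a := proj v with ha
    set w := Φ.mulVec x with hwdef
    have e1 : w ⬝ᵥ Ξ.mulVec v = w ⬝ᵥ Ξ.mulVec a := by
      have h3 : w ⬝ᵥ Ξ.mulVec v - w ⬝ᵥ Ξ.mulVec a = w ⬝ᵥ Ξ.mulVec (v - a) := by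
        simp only [hB, Pi.sub_apply, ← Finset.sum_sub_distrib]
        exact Finset.sum_congr rfl fun i _ => by ring
      have := horth
      linarith [h3, this]
    have e2 : (a - w) ⬝ᵥ Ξ.mulVec (a - w)
        = a ⬝ᵥ Ξ.mulVec a - 2 * (w ⬝ᵥ Ξ.mulVec a) + w ⬝ᵥ Ξ.mulVec w := by
      simp only [hB, Pi.sub_apply, Finset.mul_sum, ← Finset.sum_sub_distrib,
        ← Finset.sum_add_distrib]
      exact Finset.sum_congr rfl fun i _ => by ring
    rw [e1, e2]; ring
  -- affineness of the Bellman error in θ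
  have hδaff : ∀ (θ₀ θ₁ : Fin d → ℝ) (t : ℝ),
      T (Φ.mulVec ((1-t) • θ₀ + t • θ₁)) - Φ.mulVec ((1-t) • θ₀ + t • θ₁)
        = (1-t) • (T (Φ.mulVec θ₀) - Φ.mulVec θ₀) + t • (T (Φ.mulVec θ₁) - Φ.mulVec θ₁) := by
    intro θ₀ θ₁ t
    have hΦm : Φ.mulVec ((1-t) • θ₀ + t • θ₁)
        = (1-t) • Φ.mulVec θ₀ + t • Φ.mulVec θ₁ := by
      rw [Matrix.mulVec_add, Matrix.mulVec_smul, Matrix.mulVec_smul]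
    rw [hT, hT, hT, hΦm]
    have hPm : P.mulVec ((1-t) • Φ.mulVec θ₀ + t • Φ.mulVec θ₁)
        = (1-t) • P.mulVec (Φ.mulVec θ₀) + t • P.mulVec (Φ.mulVec θ₁) := by
      rw [Matrix.mulVec_add, Matrix.mulVec_smul, Matrix.mulVec_smul]
    rw [hPm]
    funext i
    simp only [Pi.add_apply, Pi.sub_apply, Pi.smul_apply, smul_eq_mul]
    ring
  -- uniqueness characterization of the projection
  have hproj_char : ∀ (v w : Fin n → ℝ), (∃ c, w = Φ.mulVec c) →
      (∀ x, Φ.mulVec x ⬝ᵥ Ξ.mulVec (v - w) = 0) → w = proj v := by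
    rintro v w ⟨c, rfl⟩ hw
    obtain ⟨c', hc'⟩ := hproj_mem v
    have hdiff : Φ.mulVec c - proj v = Φ.mulVec (c - c') := by
      rw [Matrix.mulVec_sub, hc']
    have hzero : (Φ.mulVec c - proj v) ⬝ᵥ Ξ.mulVec (Φ.mulVec c - proj v) = 0 := by
      have h1 : (Φ.mulVec c - proj v) ⬝ᵥ Ξ.mulVec (v - proj v) = 0 := by
        rw [hdiff]; exact hproj_orth v (c - c')
      have h2 : (Φ.mulVec c - proj v) ⬝ᵥ Ξ.mulVec (v - Φ.mulVec c) = 0 := by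
        rw [hdiff]; exact hw (c - c')
      have h3 : (Φ.mulVec c - proj v) ⬝ᵥ Ξ.mulVec (v - proj v)
          - (Φ.mulVec c - proj v) ⬝ᵥ Ξ.mulVec (v - Φ.mulVec c)
          = (Φ.mulVec c - proj v) ⬝ᵥ Ξ.mulVec (Φ.mulVec c - proj v) := by
        simp only [hB, Pi.sub_apply, ← Finset.sum_sub_distrib]
        exact Finset.sum_congr rfl fun i _ => by ring
      linarith
    exact sub_eq_zero.mp (hBzero _ hzero)
  -- linearity of the projection
  have hproj_lin : ∀ (u v : Fin n → ℝ) (a b : ℝ),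
      proj (a • u + b • v) = a • proj u + b • proj v := by
    intro u v a b
    refine (hproj_char (a • u + b • v) (a • proj u + b • proj v) ?_ ?_).symm
    · obtain ⟨c₁, hc₁⟩ := hproj_mem u
      obtain ⟨c₂, hc₂⟩ := hproj_mem v
      exact ⟨a • c₁ + b • c₂, by
        rw [Matrix.mulVec_add, Matrix.mulVec_smul, Matrix.mulVec_smul, hc₁, hc₂]⟩
    · intro x
      have h1 := hproj_orth u x
      have h2 := hproj_orth v x
      have h3 : Φ.mulVec x ⬝ᵥ Ξ.mulVec ((a • u + b • v) - (a • proj u + b • proj v))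
          = a * (Φ.mulVec x ⬝ᵥ Ξ.mulVec (u - proj u))
            + b * (Φ.mulVec x ⬝ᵥ Ξ.mulVec (v - proj v)) := by
        simp only [hB, Pi.sub_apply, Pi.add_apply, Pi.smul_apply, smul_eq_mul,
          Finset.mul_sum, ← Finset.sum_add_distrib]
        exact Finset.sum_congr rfl fun i _ => by ring
      rw [h3, h1, h2]; ring
  -- the row space
  have hRspan : Submodule.span ℝ (Set.range (fun i : Fin n => Φ i))
      = LinearMap.range Φᵀ.mulVecLin := by
    rw [Matrix.range_mulVecLin]; rfl
  have hRinj : ∀ x : Fin d → ℝ,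
      x ∈ Submodule.span ℝ (Set.range (fun i : Fin n => Φ i)) →
      Φ.mulVec x = 0 → x = 0 := by
    intro x hx h
    rw [hRspan] at hx
    obtain ⟨c, hc⟩ := hx
    have h1 : x ⬝ᵥ x = 0 := by
      nth_rewrite 2 [← hc]
      rw [Matrix.mulVecLin_apply, Matrix.dotProduct_mulVec, Matrix.vecMul_transpose, h,
        zero_dotProduct]
    exact dotProduct_self_eq_zero.mp h1
  have hsplit : ∀ β : Fin d → ℝ, ∃ x : Fin d → ℝ,
      x ∈ Submodule.span ℝ (Set.range (fun i : Fin n => Φ i)) ∧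
      Φ.mulVec x = Φ.mulVec β := by
    intro β
    have hdisj : Disjoint (LinearMap.range Φᵀ.mulVecLin) (LinearMap.ker Φ.mulVecLin) := by
      rw [Submodule.disjoint_def]
      intro x hx hxK
      refine hRinj x (by rw [hRspan]; exact hx) hxK
    have hdim : Module.finrank ℝ (LinearMap.range Φᵀ.mulVecLin)
        + Module.finrank ℝ (LinearMap.ker Φ.mulVecLin) = Module.finrank ℝ (Fin d → ℝ) := by
      have h2 : Φᵀ.rank = Φ.rank := Matrix.rank_transpose Φ
      have h1 : Module.finrank ℝ (LinearMap.range Φᵀ.mulVecLin) = Φᵀ.rank := rfl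
      rw [h1, h2]
      exact LinearMap.finrank_range_add_finrank_ker _
    have htop := Submodule.eq_top_of_disjoint _ _ hdim.ge hdisj
    have hβ : β ∈ LinearMap.range Φᵀ.mulVecLin ⊔ LinearMap.ker Φ.mulVecLin := by
      rw [htop]; trivial
    obtain ⟨x, hx, k, hk, hxk⟩ := Submodule.mem_sup.mp hβ
    refine ⟨x, by rw [hRspan]; exact hx, ?_⟩
    have hk0 : Φ.mulVec k = 0 := hk
    rw [← hxk, Matrix.mulVec_add, hk0, add_zero]
  -- the projected Bellman error is constant on the set of minimizers
  have hconst : ∀ θ₀ : Fin d → ℝ, (∀ θ', Jp θ₀ ≤ Jp θ') → ∀ θ₁ : Fin d → ℝ,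
      (∀ θ', Jp θ₁ ≤ Jp θ') →
      proj (T (Φ.mulVec θ₀) - Φ.mulVec θ₀) = proj (T (Φ.mulVec θ₁) - Φ.mulVec θ₁) := by
    intro θ₀ h₀ θ₁ h₁
    set a := proj (T (Φ.mulVec θ₀) - Φ.mulVec θ₀) with ha
    set b := proj (T (Φ.mulVec θ₁) - Φ.mulVec θ₁) with hb
    set m := (1-(1/2:ℝ)) • θ₀ + (1/2:ℝ) • θ₁ with hm
    have hdm := hδaff θ₀ θ₁ (1/2)
    have hpm : proj (T (Φ.mulVec m) - Φ.mulVec m) = (1-(1/2:ℝ)) • a + (1/2:ℝ) • b := by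
      rw [hm, hdm]; exact hproj_lin _ _ _ _
    have hpconv : p m ≤ (1-(1/2:ℝ)) * p θ₀ + (1/2:ℝ) * p θ₁ :=
      hp_conv.2 (Set.mem_univ θ₀) (Set.mem_univ θ₁) (by norm_num) (by norm_num) (by norm_num)
    have hq : ((1-(1/2:ℝ)) • a + (1/2:ℝ) • b) ⬝ᵥ Ξ.mulVec ((1-(1/2:ℝ)) • a + (1/2:ℝ) • b)
        = (1/2) * (a ⬝ᵥ Ξ.mulVec a) + (1/2) * (b ⬝ᵥ Ξ.mulVec b)
          - (1/4) * ((a-b) ⬝ᵥ Ξ.mulVec (a-b)) := by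
      simp only [hB, Pi.add_apply, Pi.smul_apply, Pi.sub_apply, smul_eq_mul, Finset.mul_sum,
        ← Finset.sum_sub_distrib, ← Finset.sum_add_distrib]
      exact Finset.sum_congr rfl fun i _ => by ring
    have hJm := hJp m
    rw [hpm, hq] at hJm
    have hJ0 := hJp θ₀
    have hJ1 := hJp θ₁
    rw [← ha] at hJ0
    rw [← hb] at hJ1
    have h0m := h₀ m
    have h01 := h₀ θ₁
    have h10 := h₁ θ₀
    have hD := hBnn (a - b)
    have hD0 : (a-b) ⬝ᵥ Ξ.mulVec (a-b) = 0 := le_antisymm (by linarith) hD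
    exact sub_eq_zero.mp (hBzero _ hD0)
  -- maximization property in x
  have hmax : ∀ (θb xo : Fin d → ℝ), Φ.mulVec xo = proj (T (Φ.mulVec θb) - Φ.mulVec θb) →
      ∀ x, ψ θb x ≤ ψ θb xo := by
    intro θb xo hxo x
    have h1 := hkey θb x
    have h2 := hkey θb xo
    have h3 : proj (T (Φ.mulVec θb) - Φ.mulVec θb) - Φ.mulVec xo = 0 := by
      rw [hxo, sub_self]
    rw [h3] at h2
    have h4 : (0 : Fin n → ℝ) ⬝ᵥ Ξ.mulVec 0 = 0 := by simp
    rw [h4] at h2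
    have h5 := hBnn (proj (T (Φ.mulVec θb) - Φ.mulVec θb) - Φ.mulVec x)
    linarith
  -- minimization property in θ
  have hmin : ∀ θb : Fin d → ℝ, (∀ θ', Jp θb ≤ Jp θ') →
      ∀ xo : Fin d → ℝ, Φ.mulVec xo = proj (T (Φ.mulVec θb) - Φ.mulVec θb) →
      ∀ θ, ψ θb xo ≤ ψ θ xo := by
    intro θb hopt xo hxo θ
    set pb := proj (T (Φ.mulVec θb) - Φ.mulVec θb) with hpb
    set pθ := proj (T (Φ.mulVec θ) - Φ.mulVec θ) with hpθ
    set c := (1/2) * ((pθ - pb) ⬝ᵥ Ξ.mulVec (pθ - pb)) with hc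
    have hc0 : 0 ≤ c := by
      have := hBnn (pθ - pb); rw [hc]; linarith
    -- Jp θb = ψ θb xo
    have hE1 : Jp θb = ψ θb xo := by
      have h2 := hkey θb xo
      rw [← hpb] at h2
      have h3 : pb - Φ.mulVec xo = 0 := by rw [hxo, sub_self]
      rw [h3] at h2
      have h4 : (0 : Fin n → ℝ) ⬝ᵥ Ξ.mulVec 0 = 0 := by simp
      rw [h4] at h2
      linarith
    have hstep : ∀ t : ℝ, 0 < t → t ≤ 1 → 0 ≤ (ψ θ xo - ψ θb xo) + t * c := by
      intro t ht0 ht1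
      set θt := (1-t) • θb + t • θ with hθt
      have hdm := hδaff θb θ t
      have hpt : proj (T (Φ.mulVec θt) - Φ.mulVec θt) = (1-t) • pb + t • pθ := by
        rw [hθt, hdm]; exact hproj_lin _ _ _ _
      -- E3 : Jp θt = ψ θt xo + t^2 * c
      have hE3 : Jp θt = ψ θt xo + t^2 * c := by
        have h2 := hkey θt xo
        rw [hpt] at h2
        have h5 : ((1-t) • pb + t • pθ - Φ.mulVec xo) ⬝ᵥ
            Ξ.mulVec ((1-t) • pb + t • pθ - Φ.mulVec xo)
            = t^2 * (2 * c) := by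
          rw [hc]
          have hxo' : Φ.mulVec xo = pb := by rw [hxo, hpb]
          rw [hxo']
          simp only [hB, Pi.add_apply, Pi.smul_apply, Pi.sub_apply, smul_eq_mul,
            Finset.mul_sum]
          exact Finset.sum_congr rfl fun i _ => by ring
        rw [h5] at h2
        rw [h2]; ring
      -- quadratic part of ψ is affine in θ
      have hXt : Φ.mulVec xo ⬝ᵥ Ξ.mulVec (T (Φ.mulVec θt) - Φ.mulVec θt)
          = (1-t) * (Φ.mulVec xo ⬝ᵥ Ξ.mulVec (T (Φ.mulVec θb) - Φ.mulVec θb))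
            + t * (Φ.mulVec xo ⬝ᵥ Ξ.mulVec (T (Φ.mulVec θ) - Φ.mulVec θ)) := by
        rw [← hθt] at hdm
        rw [hdm]
        simp only [hB, Pi.add_apply, Pi.smul_apply, Pi.sub_apply, smul_eq_mul,
          Finset.mul_sum, ← Finset.sum_add_distrib]
        exact Finset.sum_congr rfl fun i _ => by ring
      have hptc : p θt ≤ (1-t) * p θb + t * p θ :=
        hp_conv.2 (Set.mem_univ θb) (Set.mem_univ θ) (by linarith) (le_of_lt ht0) (by ring)
      have hψt := hψ θt xo
      have hψb := hψ θb xo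
      have hψθ := hψ θ xo
      -- E : t*(ψθ − ψθb) + t²c ≥ Jp θt − Jp θb ≥ 0
      have hE : t * (ψ θ xo - ψ θb xo) + t^2 * c
          ≥ (Jp θt - Jp θb) + ((1-t) * p θb + t * p θ - p θt) - ((1-t) * p θb + t * p θ - p θt) := by
        have : t * (ψ θ xo - ψ θb xo) + t^2 * c
            = (Jp θt - Jp θb) + ((1-t) * p θb + t * p θ - p θt) := by
          rw [hE3, hE1, hψt, hψb, hψθ, hXt]
          ring
        linarith
      have hE2 := hopt θt
      have h6 : 0 ≤ t * (ψ θ xo - ψ θb xo) + t^2 * c := by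
        have : t * (ψ θ xo - ψ θb xo) + t^2 * c
            = (Jp θt - Jp θb) + ((1-t) * p θb + t * p θ - p θt) := by
          rw [hE3, hE1, hψt, hψb, hψθ, hXt]
          ring
        rw [this]
        have h7 : 0 ≤ (1-t) * p θb + t * p θ - p θt := by linarith
        linarith
      have h8 : t * ((ψ θ xo - ψ θb xo) + t * c)
          = t * (ψ θ xo - ψ θb xo) + t^2 * c := by ring
      by_contra hneg
      push_neg at hneg
      have h9 : t * ((ψ θ xo - ψ θb xo) + t * c) < 0 :=
        mul_neg_of_pos_of_neg ht0 hneg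
      rw [h8] at h9
      linarith
    by_contra hlt
    push_neg at hlt
    set A := ψ θ xo - ψ θb xo with hA
    have hAneg : A < 0 := by rw [hA]; linarith
    set t := min 1 ((-A)/(2*c+1)) with ht
    have ht0 : 0 < t := by
      apply lt_min
      · norm_num
      · apply div_pos (by linarith) (by linarith)
    have ht1 : t ≤ 1 := min_le_left _ _
    have ht2 : t ≤ (-A)/(2*c+1) := min_le_right _ _
    have ht3 : t * (2*c+1) ≤ -A := by
      rw [← le_div_iff₀ (by linarith : (0:ℝ) < 2*c+1)]
      exact ht2
    have ht4 : t * c < t * (2*c+1) := by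
      apply mul_lt_mul_of_pos_left _ ht0
      linarith
    have hs := hstep t ht0 ht1
    linarith
  -- construct x_opt
  obtain ⟨θ0, hθ0⟩ := hne
  obtain ⟨β, hβ⟩ := hproj_mem (T (Φ.mulVec θ0) - Φ.mulVec θ0)
  obtain ⟨xo, hxoR, hxoeq⟩ := hsplit β
  have hxo0 : Φ.mulVec xo = proj (T (Φ.mulVec θ0) - Φ.mulVec θ0) := by
    rw [hxoeq, ← hβ]
  have hxoθ : ∀ θb : Fin d → ℝ, (∀ θ', Jp θb ≤ Jp θ') →
      Φ.mulVec xo = proj (T (Φ.mulVec θb) - Φ.mulVec θb) := by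
    intro θb hb
    rw [hxo0]
    exact hconst θ0 hθ0 θb hb
  have hzero0 : (0 : Fin n → ℝ) ⬝ᵥ Ξ.mulVec 0 = 0 := by simp
  -- the saddle-point set equality
  have hsetEq : ({q : (Fin d → ℝ) × (Fin d → ℝ) |
        q.2 ∈ Submodule.span ℝ (Set.range (fun i : Fin n => Φ i)) ∧
        (∀ θ : Fin d → ℝ, ψ q.1 q.2 ≤ ψ θ q.2) ∧
        (∀ x : Fin d → ℝ, ψ q.1 x ≤ ψ q.1 q.2)} =
      {θ : Fin d → ℝ | ∀ θ', Jp θ ≤ Jp θ'} ×ˢ {xo}) := by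
    apply Set.ext
    rintro ⟨θb, xb⟩
    simp only [Set.mem_setOf_eq, Set.mem_prod, Set.mem_singleton_iff]
    constructor
    · rintro ⟨hxbR, hminb, hmaxb⟩
      obtain ⟨β', hβ'⟩ := hproj_mem (T (Φ.mulVec θb) - Φ.mulVec θb)
      have h1 := hkey θb β'
      have h3 : proj (T (Φ.mulVec θb) - Φ.mulVec θb) - Φ.mulVec β' = 0 := by
        rw [hβ', sub_self]
      rw [h3, hzero0] at h1
      have h2 := hkey θb xb
      have h5 := hmaxb β'
      have h6 := hBnn (proj (T (Φ.mulVec θb) - Φ.mulVec θb) - Φ.mulVec xb)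
      have h7 : (proj (T (Φ.mulVec θb) - Φ.mulVec θb) - Φ.mulVec xb) ⬝ᵥ
          Ξ.mulVec (proj (T (Φ.mulVec θb) - Φ.mulVec θb) - Φ.mulVec xb) = 0 :=
        le_antisymm (by linarith) h6
      have h8 : Φ.mulVec xb = proj (T (Φ.mulVec θb) - Φ.mulVec θb) :=
        (sub_eq_zero.mp (hBzero _ h7)).symm
      have h2' : Jp θb = ψ θb xb := by
        rw [h7] at h2; linarith
      have hopt : ∀ θ', Jp θb ≤ Jp θ' := by
        intro θ'
        have h9 := hkey θ' xb
        have h10 := hBnn (proj (T (Φ.mulVec θ') - Φ.mulVec θ') - Φ.mulVec xb)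
        have h11 := hminb θ'
        linarith
      refine ⟨hopt, ?_⟩
      have h13 : Φ.mulVec (xb - xo) = 0 := by
        rw [Matrix.mulVec_sub, h8, ← hxoθ θb hopt, sub_self]
      have h15 : xb - xo ∈ Submodule.span ℝ (Set.range (fun i : Fin n => Φ i)) :=
        Submodule.sub_mem _ hxbR hxoR
      exact sub_eq_zero.mp (hRinj _ h15 h13)
    · rintro ⟨hopt, heq⟩
      rw [heq]
      exact ⟨hxoR, hmin θb hopt xo (hxoθ θb hopt), hmax θb xo (hxoθ θb hopt)⟩
  refine ⟨xo, hxoR, hsetEq, ?_, ?_⟩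
  · -- uniqueness of x_opt
    intro y hy hyeq
    have hmem : ((θ0, xo) : (Fin d → ℝ) × (Fin d → ℝ)) ∈
        ({θ : Fin d → ℝ | ∀ θ', Jp θ ≤ Jp θ'} ×ˢ {y}) := by
      rw [← hyeq, hsetEq]
      exact ⟨hθ0, rfl⟩
    exact hmem.2.symm
  · -- the linear system
    intro θb hopt
    have hx := hxoθ θb hopt
    have hTXi : ∀ (u : Fin n → ℝ) (j : Fin d),
        (Φᵀ * Ξ).mulVec u j = Φ.mulVec (Pi.single j 1) ⬝ᵥ Ξ.mulVec u := by
      intro u j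
      rw [← Matrix.mulVec_mulVec, Matrix.mulVec_single]
      simp [Matrix.mulVec, dotProduct, Matrix.transpose_apply]
    have h0 : (Φᵀ * Ξ).mulVec ((T (Φ.mulVec θb) - Φ.mulVec θb)
        - proj (T (Φ.mulVec θb) - Φ.mulVec θb)) = 0 := by
      funext j
      rw [hTXi]
      simpa using hproj_orth (T (Φ.mulVec θb) - Φ.mulVec θb) (Pi.single j 1)
    rw [Matrix.mulVec_sub] at h0
    constructor
    · have e1 : (Φᵀ * Ξ * Φ).mulVec xo = (Φᵀ * Ξ).mulVec (Φ.mulVec xo) := by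
        rw [← Matrix.mulVec_mulVec]
      rw [e1, hx]
      exact (sub_eq_zero.mp h0).symm
    · intro x hxR hxeq
      have e1 : (Φᵀ * Ξ * Φ).mulVec xo
          = (Φᵀ * Ξ).mulVec (T (Φ.mulVec θb) - Φ.mulVec θb) := by
        rw [← Matrix.mulVec_mulVec, hx]
        exact (sub_eq_zero.mp h0).symm
      have e2 : (Φᵀ * Ξ * Φ).mulVec (x - xo) = 0 := by
        rw [Matrix.mulVec_sub, hxeq, e1, sub_self]
      have e3 : (Φ.mulVec (x - xo)) ⬝ᵥ Ξ.mulVec (Φ.mulVec (x - xo)) = 0 := by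
        have e4 : (x - xo) ⬝ᵥ (Φᵀ * Ξ * Φ).mulVec (x - xo)
            = (Φ.mulVec (x - xo)) ⬝ᵥ Ξ.mulVec (Φ.mulVec (x - xo)) := by
          rw [show Φᵀ * Ξ * Φ = Φᵀ * (Ξ * Φ) from by rw [Matrix.mul_assoc],
            ← Matrix.mulVec_mulVec, Matrix.dotProduct_mulVec, Matrix.vecMul_transpose,
            ← Matrix.mulVec_mulVec]
        rw [← e4, e2, dotProduct_zero]
      have e5 : Φ.mulVec (x - xo) = 0 := hBzero _ e3
      have e6 : x - xo ∈ Submodule.span ℝ (Set.range (fun i : Fin n => Φ i)) :=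
        Submodule.sub_mem _ hxR hxoR
      exact sub_eq_zero.mp (hRinj _ e6 e5)
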